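/- Let Q be a finite acyclic quiver with a source ω such that Q' = Q \ {ω} is connected, and suppose there is an arrow ω → p. Let X be an exceptional representation of Q' (extended by 0 at ω), Y = S(ω). Let M be a representation of Q with an exact sequence 0 → X^a → M → Y^b → 0 such that Y is not a subrepresentation of M. Then every subrepresentation U of M with dim U = dim X + dim Y is indecomposable and fits in an exact sequence 0 → X → U → Y → 0. -/

import Mathlib

/- Condition (C), Case 1: ω a source of the finite acyclic quiver Q with an arrow
   ω → p, Q' = Q \ {ω} connected, X an exceptional representation of Q' (extended by 0
   at ω), Y = S(ω), and M a representation with an exact sequence 0 → X^a → M → Y^b → 0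
   such that Y does not embed in M.  Then every subrepresentation U ≤ M with
   dim U = dim X + dim Y is indecomposable and fits in an exact sequence
   0 → X → U → Y → 0. -/

structure QRep (k : Type) [Field k] (V A : Type) (s t : A → V) where
  space : V → Type
  [addCommGroup : ∀ v, AddCommGroup (space v)]
  [module : ∀ v, Module k (space v)]
  map : ∀ a : A, space (s a) →ₗ[k] space (t a)

attribute [instance] QRep.addCommGroup QRep.module

def NoCycle {V A : Type} (s t : A → V) : Prop :=
  ∀ (m : ℕ) (c : Fin (m + 1) → A),
    (∀ i : Fin m, t (c i.castSucc) = s (c i.succ)) → t (c (Fin.last m)) ≠ s (c 0)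

def IsQHom (k : Type) [Field k] {V A : Type} {s t : A → V} (X Y : QRep k V A s t)
    (f : ∀ v, X.space v →ₗ[k] Y.space v) : Prop :=
  ∀ a : A, (f (t a)).comp (X.map a) = (Y.map a).comp (f (s a))

def QRep.pow (k : Type) [Field k] {V A : Type} {s t : A → V} (X : QRep k V A s t)
    (n : ℕ) : QRep k V A s t where
  space v := Fin n → X.space v
  addCommGroup := fun _ => inferInstance
  module := fun _ => inferInstance
  map a := LinearMap.pi fun j => (X.map a).comp (LinearMap.proj j)

/-- Adjacency in the quiver avoiding the vertex ω. -/
def AdjAvoiding {V A : Type} (s t : A → V) (ω : V) (x y : V) : Prop :=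
  x ≠ ω ∧ y ≠ ω ∧ ∃ a : A, (s a = x ∧ t a = y) ∨ (s a = y ∧ t a = x)

section Aux

variable {k : Type} [Field k] {V A : Type} {s t : A → V}

/-- The differential whose kernel is the space of quiver-representation homs. -/
def dmap (P N : QRep k V A s t) :
    (∀ v, P.space v →ₗ[k] N.space v) →ₗ[k] (∀ a, P.space (s a) →ₗ[k] N.space (t a)) where
  toFun f := fun a => ((f (t a)).comp (P.map a)) - ((N.map a).comp (f (s a)))
  map_add' f g := by
    funext a; ext x
    simp [LinearMap.add_comp, LinearMap.comp_add]
    abel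
  map_smul' c f := by
    funext a; ext x
    simp [smul_sub]

lemma mem_ker_dmap {P N : QRep k V A s t} {f : ∀ v, P.space v →ₗ[k] N.space v} :
    f ∈ LinearMap.ker (dmap P N) ↔ IsQHom k P N f := by
  rw [LinearMap.mem_ker]
  constructor
  · intro h a
    have := congrFun h a
    simpa [dmap, sub_eq_zero] using this
  · intro h
    funext a
    simp [dmap, sub_eq_zero, h a]

lemma exists_nonzero_qhom [Finite V] [Finite A] (X N : QRep k V A s t)
    [∀ v, FiniteDimensional k (X.space v)] [∀ v, FiniteDimensional k (N.space v)]
    (hbrick : ∀ f, IsQHom k X X f → ∃ c : k, ∀ v, f v = c • LinearMap.id)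
    (hext : ∀ h : ∀ a : A, X.space (s a) →ₗ[k] X.space (t a),
      ∃ f : ∀ v, X.space v →ₗ[k] X.space v,
        ∀ a, h a = ((f (t a)).comp (X.map a)) - ((X.map a).comp (f (s a))))
    (hdim : ∀ v, Module.finrank k (N.space v) = Module.finrank k (X.space v))
    (v₀ : V) (hv₀ : Nontrivial (X.space v₀)) :
    ∃ g : ∀ v, X.space v →ₗ[k] N.space v, IsQHom k X N g ∧ g ≠ 0 := by
  have := Fintype.ofFinite V
  have := Fintype.ofFinite A
  have hD0 : Module.finrank k (∀ v, X.space v →ₗ[k] N.space v)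
      = Module.finrank k (∀ v, X.space v →ₗ[k] X.space v) := by
    rw [Module.finrank_pi_fintype, Module.finrank_pi_fintype]
    exact Finset.sum_congr rfl fun v _ => by
      rw [Module.finrank_linearMap, Module.finrank_linearMap, hdim]
  have hD1 : Module.finrank k (∀ a, X.space (s a) →ₗ[k] N.space (t a))
      = Module.finrank k (∀ a, X.space (s a) →ₗ[k] X.space (t a)) := by
    rw [Module.finrank_pi_fintype, Module.finrank_pi_fintype]
    exact Finset.sum_congr rfl fun a _ => by
      rw [Module.finrank_linearMap, Module.finrank_linearMap, hdim]
  have hsurj : LinearMap.range (dmap X X) = ⊤ := by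
    rw [LinearMap.range_eq_top]
    intro h
    obtain ⟨f, hf⟩ := hext h
    exact ⟨f, funext fun a => (hf a).symm⟩
  have hker1 : Module.finrank k (LinearMap.ker (dmap X X)) = 1 := by
    let base : k →ₗ[k] (∀ v, X.space v →ₗ[k] X.space v) :=
      { toFun := fun c => fun v => c • LinearMap.id
        map_add' := fun c d => by funext v; ext x; simp [add_smul]
        map_smul' := fun c d => by funext v; ext x; simp [mul_smul] }
    have hbasemem : ∀ c : k, base c ∈ LinearMap.ker (dmap X X) := by
      intro c
      rw [mem_ker_dmap]
      intro a
      ext x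
      simp [base]
    let Φ : k →ₗ[k] LinearMap.ker (dmap X X) := LinearMap.codRestrict _ base hbasemem
    have hΦbij : Function.Bijective Φ := by
      constructor
      · intro c d h
        have h' : base c = base d := congrArg Subtype.val h
        have h2 := congrFun h' v₀
        obtain ⟨x, hx⟩ := exists_ne (0 : X.space v₀)
        have h3 : c • x = d • x := by
          have := congrArg (fun (f : X.space v₀ →ₗ[k] X.space v₀) => f x) h2
          simpa [base] using this
        have h4 : (c - d) • x = 0 := by rw [sub_smul, h3, sub_self]
        rcases smul_eq_zero.mp h4 with h5 | h5
        · exact sub_eq_zero.mp h5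
        · exact absurd h5 hx
      · rintro ⟨f, hf⟩
        obtain ⟨c, hc⟩ := hbrick f (mem_ker_dmap.mp hf)
        exact ⟨c, Subtype.ext (funext fun v => (hc v).symm)⟩
    have := (LinearEquiv.ofBijective Φ hΦbij).finrank_eq
    rw [← this, Module.finrank_self]
  have hrn : Module.finrank k (∀ v, X.space v →ₗ[k] X.space v)
      = Module.finrank k (∀ a, X.space (s a) →ₗ[k] X.space (t a)) + 1 := by
    have := LinearMap.finrank_range_add_finrank_ker (dmap X X)
    rw [hsurj, finrank_top, hker1] at this
    omega
  have hbound : 1 ≤ Module.finrank k (LinearMap.ker (dmap X N)) := by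
    have h1 := LinearMap.finrank_range_add_finrank_ker (dmap X N)
    have h2 : Module.finrank k (LinearMap.range (dmap X N))
        ≤ Module.finrank k (∀ a, X.space (s a) →ₗ[k] N.space (t a)) :=
      Submodule.finrank_le _
    rw [hD0, hrn, ← hD1] at h1
    omega
  have hne : LinearMap.ker (dmap X N) ≠ ⊥ := by
    intro h
    rw [h, finrank_bot] at hbound
    omega
  obtain ⟨g, hg, hgne⟩ := Submodule.ne_bot_iff _ |>.mp hne
  exact ⟨g, mem_ker_dmap.mp hg, hgne⟩

/-- The subrepresentation of `U` obtained by replacing the space at `ω` by `0`. -/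
noncomputable def Wsub (M : QRep k V A s t) (U : ∀ v, Submodule k (M.space v)) (ω : V)
    (v : V) : Submodule k (M.space v) :=
  open Classical in if v = ω then ⊥ else U v

lemma Wsub_eq_bot (M : QRep k V A s t) (U : ∀ v, Submodule k (M.space v)) (ω : V) :
    Wsub M U ω ω = ⊥ := if_pos rfl

lemma Wsub_eq (M : QRep k V A s t) (U : ∀ v, Submodule k (M.space v)) (ω : V)
    {v : V} (hv : v ≠ ω) : Wsub M U ω v = U v := if_neg hv

lemma Wsub_le (M : QRep k V A s t) (U : ∀ v, Submodule k (M.space v)) (ω : V)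
    (v : V) : Wsub M U ω v ≤ U v := by
  rcases eq_or_ne v ω with rfl | hv
  · rw [Wsub_eq_bot]; exact bot_le
  · rw [Wsub_eq M U ω hv]

lemma Wsub_closed {M : QRep k V A s t} {U : ∀ v, Submodule k (M.space v)} {ω : V}
    (hsource : ∀ a : A, t a ≠ ω)
    (hU : ∀ a' : A, ∀ x ∈ U (s a'), M.map a' x ∈ U (t a')) (a' : A) :
    ∀ x ∈ Wsub M U ω (s a'), M.map a' x ∈ Wsub M U ω (t a') := by
  intro x hx
  rw [Wsub_eq M U ω (hsource a')]
  rcases eq_or_ne (s a') ω with h | h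
  · have hb : Wsub M U ω (s a') = ⊥ := if_pos h
    rw [hb, Submodule.mem_bot] at hx
    rw [hx, map_zero]
    exact Submodule.zero_mem _
  · rw [Wsub_eq M U ω h] at hx
    exact hU a' x hx

/-- The representation structure on `Wsub`. -/
noncomputable def WRep (M : QRep k V A s t) (U : ∀ v, Submodule k (M.space v)) (ω : V)
    (hsource : ∀ a : A, t a ≠ ω)
    (hU : ∀ a' : A, ∀ x ∈ U (s a'), M.map a' x ∈ U (t a')) : QRep k V A s t where
  space v := ↥(Wsub M U ω v)
  addCommGroup v := inferInstance
  module v := inferInstance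
  map a' := (M.map a').restrict (Wsub_closed hsource hU a')

end Aux

theorem stmt14 (k : Type) [Field k] {V A : Type} [Finite V] [Finite A]
    (s t : A → V) (hacyclic : NoCycle s t)
    (ω p : V) (hsource : ∀ a : A, t a ≠ ω)
    (a₀ : A) (ha₀s : s a₀ = ω) (ha₀t : t a₀ = p)
    -- Q' = Q \ {ω} is connected
    (hconn : ∀ x y : V, x ≠ ω → y ≠ ω →
      Relation.ReflTransGen (AdjAvoiding s t ω) x y)
    -- X: an exceptional representation of Q' extended by 0 at ω
    (X : QRep k V A s t) [∀ v, FiniteDimensional k (X.space v)]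
    (hXω : Subsingleton (X.space ω))
    (hbrick : ∀ f, IsQHom k X X f → ∃ c : k, ∀ v, f v = c • LinearMap.id)
    (hext : ∀ h : ∀ a : A, X.space (s a) →ₗ[k] X.space (t a),
      ∃ f : ∀ v, X.space v →ₗ[k] X.space v,
        ∀ a, h a = ((f (t a)).comp (X.map a)) - ((X.map a).comp (f (s a))))
    -- Y = S(ω)
    (Y : QRep k V A s t) [∀ v, FiniteDimensional k (Y.space v)]
    (hY0 : ∀ v, v ≠ ω → Subsingleton (Y.space v))
    (hY1 : Module.finrank k (Y.space ω) = 1)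
    -- M with an exact sequence 0 → X^a → M → Y^b → 0
    (M : QRep k V A s t) [∀ v, FiniteDimensional k (M.space v)]
    (a b : ℕ)
    (ι : ∀ v, (QRep.pow k X a).space v →ₗ[k] M.space v)
    (hι : IsQHom k (QRep.pow k X a) M ι) (hιinj : ∀ v, Function.Injective (ι v))
    (π : ∀ v, M.space v →ₗ[k] (QRep.pow k Y b).space v)
    (hπ : IsQHom k M (QRep.pow k Y b) π) (hπsurj : ∀ v, Function.Surjective (π v))
    (hexact : ∀ v, LinearMap.ker (π v) = LinearMap.range (ι v))
    -- Y is not (isomorphic to) a subrepresentation of M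
    (hred : ¬ ∃ g : ∀ v, Y.space v →ₗ[k] M.space v,
      IsQHom k Y M g ∧ ∀ v, Function.Injective (g v))
    -- U ≤ M with dim U = dim X + dim Y
    (U : ∀ v, Submodule k (M.space v))
    (hU : ∀ a' : A, ∀ x ∈ U (s a'), M.map a' x ∈ U (t a'))
    (hdim : ∀ v, Module.finrank k (U v)
      = Module.finrank k (X.space v) + Module.finrank k (Y.space v)) :
    -- U is indecomposable: every idempotent endomorphism of U is 0 or the identity
    (∀ e : ∀ v, U v →ₗ[k] U v,
      (∀ a' : A, (e (t a')).comp ((M.map a').restrict (hU a')) =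
        ((M.map a').restrict (hU a')).comp (e (s a'))) →
      (∀ v, (e v).comp (e v) = e v) →
      (∀ v, e v = 0) ∨ (∀ v, e v = LinearMap.id)) ∧
    -- U fits in an exact sequence 0 → X → U → Y → 0
    (∃ (j : ∀ v, X.space v →ₗ[k] U v) (q : ∀ v, U v →ₗ[k] Y.space v),
      (∀ a' : A, (j (t a')).comp (X.map a') =
        ((M.map a').restrict (hU a')).comp (j (s a'))) ∧
      (∀ a' : A, (q (t a')).comp ((M.map a').restrict (hU a')) =
        (Y.map a').comp (q (s a'))) ∧
      (∀ v, Function.Injective (j v)) ∧ (∀ v, Function.Surjective (q v)) ∧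
      (∀ v, LinearMap.ker (q v) = LinearMap.range (j v))) := by
  classical
  haveI : ∀ v, FiniteDimensional k ((WRep M U ω hsource hU).space v) :=
    fun v => inferInstanceAs (FiniteDimensional k ↥(Wsub M U ω v))
  -- dimension bookkeeping
  have hWdim : ∀ v, Module.finrank k ↥(Wsub M U ω v) = Module.finrank k (X.space v) := by
    intro v
    rcases eq_or_ne ω v with rfl | hv
    · haveI := hXω
      rw [Wsub_eq_bot, finrank_bot, Module.finrank_zero_of_subsingleton]
    · haveI := hY0 v (Ne.symm hv)
      rw [Wsub_eq M U ω (Ne.symm hv), hdim v,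
        (Module.finrank_zero_of_subsingleton : Module.finrank k (Y.space v) = 0), add_zero]
  have hUone : Module.finrank k ↥(U ω) = 1 := by
    haveI := hXω
    rw [hdim ω, (Module.finrank_zero_of_subsingleton : Module.finrank k (X.space ω) = 0),
      zero_add, hY1]
  -- existence of an injective hom g : X → W
  obtain ⟨g, hg, hginj⟩ : ∃ g : ∀ v, X.space v →ₗ[k] ↥(Wsub M U ω v),
      IsQHom k X (WRep M U ω hsource hU) g ∧ ∀ v, Function.Injective (g v) := by
    by_cases hXtriv : ∀ v, Subsingleton (X.space v)
    · refine ⟨fun v => 0, fun a' => ?_, fun v x y _ => ?_⟩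
      · ext x
        exact (map_zero ((WRep M U ω hsource hU).map a')).symm
      · haveI := hXtriv v
        exact Subsingleton.elim x y
    · push_neg at hXtriv
      obtain ⟨v₀, hv₀⟩ := hXtriv
      obtain ⟨g₀, hg₀, hg₀ne⟩ := exists_nonzero_qhom X (WRep M U ω hsource hU) hbrick hext
        (fun v => hWdim v) v₀ hv₀
      -- ι is bijective away from ω
      have hιbij : ∀ v, v ≠ ω → Function.Bijective (ι v) := by
        intro v hv
        refine ⟨hιinj v, ?_⟩
        rw [← LinearMap.range_eq_top, ← hexact v, LinearMap.ker_eq_top]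
        haveI := hY0 v hv
        haveI : Subsingleton ((QRep.pow k Y b).space v) :=
          inferInstanceAs (Subsingleton (Fin b → Y.space v))
        ext x
        exact Subsingleton.elim _ _
      -- the composite X → M
      set G : ∀ v, X.space v →ₗ[k] M.space v :=
        fun v => (Wsub M U ω v).subtype.comp (g₀ v) with hGdef
      have hGhom : ∀ (a' : A) (x : X.space (s a')),
          G (t a') (X.map a' x) = M.map a' (G (s a') x) := by
        intro a' x
        have h1 := LinearMap.congr_fun (hg₀ a') x
        simp only [LinearMap.comp_apply] at h1
        show (Wsub M U ω (t a')).subtype (g₀ (t a') (X.map a' x)) = _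
        rw [h1]
        rfl
      -- the coordinates of G are scalars
      have main : ∀ i : Fin a, ∃ ci : k, ∀ v, v ≠ ω → ∀ (x : X.space v)
          (y : (QRep.pow k X a).space v), ι v y = G v x → y i = ci • x := by
        intro i
        set φ : ∀ v, X.space v →ₗ[k] X.space v := fun v =>
          if hv : v = ω then 0 else (LinearMap.proj i).comp
            (((LinearEquiv.ofBijective (ι v) (hιbij v hv)).symm.toLinearMap).comp (G v))
          with hφdef
        have hφeval : ∀ v (hv : v ≠ ω) (x : X.space v),
            φ v x = (LinearEquiv.ofBijective (ι v) (hιbij v hv)).symm (G v x) i := by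
          intro v hv x
          simp only [hφdef, dif_neg hv, LinearMap.comp_apply, LinearMap.proj_apply,
            LinearEquiv.coe_coe]
          rfl
        have hφhom : IsQHom k X X φ := by
          intro a'
          rcases eq_or_ne (s a') ω with hs | hs
          · ext x
            haveI : Subsingleton (X.space (s a')) := by rw [hs]; exact hXω
            simp only [LinearMap.comp_apply]
            rw [Subsingleton.elim x 0]
            simp
          · have ht := hsource a'
            ext x
            simp only [LinearMap.comp_apply]
            rw [hφeval (t a') ht, hφeval (s a') hs]
            rw [hGhom a' x]
            set E := LinearEquiv.ofBijective (ι (s a')) (hιbij (s a') hs) with hE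
            set y := E.symm (G (s a') x) with hy
            have h2 : G (s a') x = ι (s a') y := by
              rw [hy]
              exact (E.apply_symm_apply _).symm
            rw [h2]
            have h3 : ι (t a') ((QRep.pow k X a).map a' y) = M.map a' (ι (s a') y) := by
              have := LinearMap.congr_fun (hι a') y
              simpa using this
            rw [← h3]
            have h4 : (LinearEquiv.ofBijective (ι (t a')) (hιbij (t a') ht)).symm
                (ι (t a') ((QRep.pow k X a).map a' y)) = (QRep.pow k X a).map a' y :=
              (LinearEquiv.ofBijective (ι (t a')) (hιbij (t a') ht)).symm_apply_apply _
            rw [h4]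
            rfl
        obtain ⟨ci, hci⟩ := hbrick φ hφhom
        refine ⟨ci, fun v hv x y hy => ?_⟩
        have h5 : φ v x = ci • x := by rw [hci v]; rfl
        rw [hφeval v hv x, ← hy] at h5
        have h6 : (LinearEquiv.ofBijective (ι v) (hιbij v hv)).symm (ι v y) = y :=
          (LinearEquiv.ofBijective (ι v) (hιbij v hv)).symm_apply_apply y
        rw [h6] at h5
        exact h5
      choose c hc using main
      -- find a vertex where g₀ is nonzero
      have hgv : ∃ v, v ≠ ω ∧ g₀ v ≠ 0 := by
        by_contra hcon
        push_neg at hcon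
        apply hg₀ne
        funext v
        by_cases hv : v = ω
        · ext x
          haveI : Subsingleton (X.space v) := by rw [hv]; exact hXω
          rw [Subsingleton.elim x 0, map_zero]
          rfl
        · exact hcon v hv
      obtain ⟨v₁, hv₁, hgv₁⟩ := hgv
      obtain ⟨x₁, hx₁⟩ : ∃ x₁ : X.space v₁, g₀ v₁ x₁ ≠ 0 := by
        by_contra hcon
        push_neg at hcon
        exact hgv₁ (by ext x; simp [hcon x])
      set E₁ := LinearEquiv.ofBijective (ι v₁) (hιbij v₁ hv₁) with hE₁
      set y₁ := E₁.symm (G v₁ x₁) with hy₁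
      have hy₁' : ι v₁ y₁ = G v₁ x₁ := E₁.apply_symm_apply _
      have hy₁ne : y₁ ≠ 0 := by
        intro h0
        apply hx₁
        have hG0 : G v₁ x₁ = 0 := by rw [← hy₁', h0, map_zero]
        simp only [hGdef, LinearMap.comp_apply] at hG0
        exact Subtype.ext hG0
      obtain ⟨i₀, hi₀⟩ : ∃ i₀ : Fin a, c i₀ ≠ 0 := by
        by_contra hcon
        push_neg at hcon
        apply hy₁ne
        funext i
        have h9 := hc i v₁ hv₁ x₁ y₁ hy₁'
        rw [hcon i, zero_smul] at h9
        exact h9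
      refine ⟨g₀, hg₀, fun v => ?_⟩
      by_cases hv : v = ω
      · intro x y _
        haveI : Subsingleton (X.space v) := by rw [hv]; exact hXω
        exact Subsingleton.elim x y
      · refine (injective_iff_map_eq_zero (g₀ v)).mpr ?_
        intro x hx0
        have hGx : G v x = 0 := by
          simp only [hGdef, LinearMap.comp_apply]
          exact congrArg Subtype.val hx0
        have h7 := hc i₀ v hv x 0 (by rw [map_zero, hGx])
        have h8 : c i₀ • x = 0 := by rw [← h7]; rfl
        rcases smul_eq_zero.mp h8 with h | h
        · exact absurd h hi₀
        · exact h
  -- g is vertexwise surjective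
  have hgsurj : ∀ v, Function.Surjective (g v) := by
    intro v
    rcases eq_or_ne ω v with rfl | hv
    · intro y
      haveI : Subsingleton ↥(Wsub M U ω ω) := by
        rw [Wsub_eq_bot]
        infer_instance
      exact ⟨0, Subsingleton.elim _ _⟩
    · have h1 : Module.finrank k (LinearMap.range (g v))
          = Module.finrank k ↥(Wsub M U ω v) := by
        rw [LinearMap.finrank_range_of_inj (hginj v)]
        exact (hWdim v).symm
      exact LinearMap.range_eq_top.mp (Submodule.eq_top_of_finrank_eq h1)
  -- the map j : X → U
  set j : ∀ v, X.space v →ₗ[k] ↥(U v) :=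
    fun v => (Submodule.inclusion (Wsub_le M U ω v)).comp (g v) with hj
  have hjcoe : ∀ v (x : X.space v), ((j v x : M.space v)) = ((g v x : M.space v)) :=
    fun v x => rfl
  have hjinj : ∀ v, Function.Injective (j v) := by
    intro v
    rw [hj]
    exact fun x y hxy =>
      hginj v (Submodule.inclusion_injective _ (by simpa using hxy))
  have hghom : ∀ (a' : A) (x : X.space (s a')),
      g (t a') (X.map a' x) = (WRep M U ω hsource hU).map a' (g (s a') x) := by
    intro a' x
    have := LinearMap.congr_fun (hg a') x
    exact this
  have hjhom : ∀ a' : A, (j (t a')).comp (X.map a') =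
      ((M.map a').restrict (hU a')).comp (j (s a')) := by
    intro a'
    ext x
    show ((g (t a') (X.map a' x) : ↥(Wsub M U ω (t a'))) : M.space (t a'))
      = M.map a' ((g (s a') x : ↥(Wsub M U ω (s a'))) : M.space (s a'))
    rw [hghom a' x]
    rfl
  have hjsurj : ∀ v, v ≠ ω → Function.Surjective (j v) := by
    intro v hv y
    obtain ⟨x, hx⟩ := hgsurj v ⟨(y : M.space v), by rw [Wsub_eq M U ω hv]; exact y.2⟩
    refine ⟨x, Subtype.ext ?_⟩
    rw [hjcoe, hx]
  -- the map q : U → Y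
  obtain ⟨q, ⟨qe, hqω⟩, hqne⟩ : ∃ q : ∀ v, ↥(U v) →ₗ[k] Y.space v,
      (∃ qe : ↥(U ω) ≃ₗ[k] Y.space ω, q ω = qe.toLinearMap) ∧
      ∀ v, v ≠ ω → q v = 0 := by
    refine ⟨fun v => if hv : v = ω then
        (LinearEquiv.ofFinrankEq ↥(U v) (Y.space v)
          (by rw [hv, hUone, hY1])).toLinearMap else 0,
      ⟨_, dif_pos rfl⟩, fun v hv => dif_neg hv⟩
  have hqhom : ∀ a' : A, (q (t a')).comp ((M.map a').restrict (hU a')) =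
      (Y.map a').comp (q (s a')) := by
    intro a'
    haveI := hY0 (t a') (hsource a')
    ext x
    exact Subsingleton.elim _ _
  have hqsurj : ∀ v, Function.Surjective (q v) := by
    intro v
    rcases eq_or_ne ω v with rfl | hv
    · rw [hqω]
      exact qe.surjective
    · intro y
      haveI := hY0 v (Ne.symm hv)
      exact ⟨0, Subsingleton.elim _ _⟩
  have hkerq : ∀ v, LinearMap.ker (q v) = LinearMap.range (j v) := by
    intro v
    rcases eq_or_ne ω v with rfl | hv
    · have hjzero : j ω = 0 := by
        ext x
        haveI := hXω
        rw [Subsingleton.elim x 0, map_zero]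
        rfl
      rw [hqω, hjzero, LinearMap.range_zero]
      exact LinearEquiv.ker qe
    · rw [hqne v (Ne.symm hv), LinearMap.ker_zero]
      exact (LinearMap.range_eq_top.mpr (hjsurj v (Ne.symm hv))).symm
  constructor
  · -- indecomposability
    intro e hcomm hidem
    -- e at ω is multiplication by a scalar cw
    obtain ⟨u₀, hu₀ne, hu₀span⟩ := finrank_eq_one_iff'.mp hUone
    obtain ⟨cw, hcw⟩ := hu₀span (e ω u₀)
    have heω : ∀ x : ↥(U ω), e ω x = cw • x := by
      intro x
      obtain ⟨d, hd⟩ := hu₀span x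
      rw [← hd, map_smul, ← hcw, smul_comm]
    have hcw2 : cw * cw = cw := by
      have h := LinearMap.congr_fun (hidem ω) u₀
      simp only [LinearMap.comp_apply] at h
      rw [heω u₀, map_smul, heω u₀, smul_smul] at h
      have h2 : (cw * cw - cw) • u₀ = 0 := by rw [sub_smul, h, sub_self]
      rcases smul_eq_zero.mp h2 with h3 | h3
      · exact sub_eq_zero.mp h3
      · exact absurd h3 hu₀ne
    -- away from ω, e is multiplication by a scalar c'
    obtain ⟨c', hc'⟩ : ∃ c' : k, ∀ v, v ≠ ω → ∀ x : ↥(U v), e v x = c' • x := by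
      have hjbij : ∀ v (hv : v ≠ ω), Function.Bijective (j v) :=
        fun v hv => ⟨hjinj v, hjsurj v hv⟩
      set f : ∀ v, X.space v →ₗ[k] X.space v := fun v =>
        if hv : v = ω then 0 else
          ((LinearEquiv.ofBijective (j v) (hjbij v hv)).symm.toLinearMap).comp
            ((e v).comp (j v)) with hfdef
      have hfeval : ∀ v (hv : v ≠ ω) (x : X.space v), j v (f v x) = e v (j v x) := by
        intro v hv x
        simp only [hfdef, dif_neg hv, LinearMap.comp_apply, LinearEquiv.coe_coe]
        exact (LinearEquiv.ofBijective (j v) (hjbij v hv)).apply_symm_apply _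
      have hfhom : IsQHom k X X f := by
        intro a'
        rcases eq_or_ne (s a') ω with hs | hs
        · ext x
          haveI : Subsingleton (X.space (s a')) := by rw [hs]; exact hXω
          simp only [LinearMap.comp_apply]
          rw [Subsingleton.elim x 0]
          simp
        · have ht := hsource a'
          ext x
          simp only [LinearMap.comp_apply]
          apply hjinj (t a')
          rw [hfeval (t a') ht]
          have h1 : j (t a') (X.map a' x) = (M.map a').restrict (hU a') (j (s a') x) := by
            have := LinearMap.congr_fun (hjhom a') x
            simpa using this
          rw [h1]
          have h2 : e (t a') ((M.map a').restrict (hU a') (j (s a') x))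
              = (M.map a').restrict (hU a') (e (s a') (j (s a') x)) := by
            have := LinearMap.congr_fun (hcomm a') (j (s a') x)
            simpa using this
          rw [h2, ← hfeval (s a') hs x]
          have h3 := LinearMap.congr_fun (hjhom a') (f (s a') x)
          simpa using h3.symm
      obtain ⟨c', hc'⟩ := hbrick f hfhom
      refine ⟨c', fun v hv x => ?_⟩
      obtain ⟨y, rfl⟩ := hjsurj v hv x
      rw [← hfeval v hv y, hc' v]
      simp
    have hcw01 : cw = 0 ∨ cw = 1 := by
      rcases mul_eq_zero.mp (show cw * (cw - 1) = 0 by linear_combination hcw2) with h | h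
      · exact Or.inl h
      · exact Or.inr (sub_eq_zero.mp h)
    -- the contradiction: a projection which is the identity at ω and zero elsewhere
    -- would produce an embedded copy of Y in M
    have key : ∀ E : ∀ v, ↥(U v) →ₗ[k] ↥(U v),
        (∀ a' : A, (E (t a')).comp ((M.map a').restrict (hU a')) =
          ((M.map a').restrict (hU a')).comp (E (s a'))) →
        (∀ x : ↥(U ω), E ω x = x) → (∀ v, v ≠ ω → E v = 0) → False := by
      intro E hEc hEω hE0
      have hkill : ∀ a' : A, s a' = ω → ∀ u : ↥(U (s a')),
          M.map a' (u : M.space (s a')) = 0 := by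
        intro a' ha' u
        have h1 : E (t a') ((M.map a').restrict (hU a') u)
            = (M.map a').restrict (hU a') (E (s a') u) := by
          have := LinearMap.congr_fun (hEc a') u
          simpa using this
        have h2 : E (s a') u = u := by
          subst ha'
          exact hEω u
        rw [h2, hE0 (t a') (hsource a')] at h1
        have h3 : (M.map a').restrict (hU a') u = 0 := by
          rw [← h1]
          simp
        have h4 := congrArg Subtype.val h3
        simpa using h4
      obtain ⟨g', ⟨ge, hg'ω⟩, hg'ne⟩ : ∃ g' : ∀ v, Y.space v →ₗ[k] M.space v,
          (∃ ge : Y.space ω ≃ₗ[k] ↥(U ω), g' ω = (U ω).subtype.comp ge.toLinearMap) ∧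
          ∀ v, v ≠ ω → g' v = 0 := by
        refine ⟨fun v => if hv : v = ω then
            (U v).subtype.comp (LinearEquiv.ofFinrankEq (Y.space v) ↥(U v)
              (by rw [hv, hUone, hY1])).toLinearMap else 0,
          ⟨_, dif_pos rfl⟩, fun v hv => dif_neg hv⟩
      apply hred
      refine ⟨g', ?_, ?_⟩
      · intro a'
        rcases eq_or_ne (s a') ω with hs | hs
        · have hgt := hg'ne (t a') (hsource a')
          subst hs
          ext y
          simp only [LinearMap.comp_apply, hgt, hg'ω, LinearMap.zero_apply,
            Submodule.coe_subtype]
          exact (hkill a' rfl (ge y)).symm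
        · ext y
          haveI := hY0 (t a') (hsource a')
          simp only [LinearMap.comp_apply, hg'ne (s a') hs, LinearMap.zero_apply, map_zero]
          rw [Subsingleton.elim ((Y.map a') y) 0, map_zero]
      · intro v
        rcases eq_or_ne ω v with rfl | hv
        · rw [hg'ω]
          intro x y hxy
          simp only [LinearMap.comp_apply] at hxy
          exact ge.injective ((U ω).injective_subtype hxy)
        · intro x y _
          haveI := hY0 v (Ne.symm hv)
          exact Subsingleton.elim x y
    -- case analysis on the two scalars
    by_cases hP : ∃ v, v ≠ ω ∧ ∃ x : ↥(U v), x ≠ 0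
    · obtain ⟨v₂, hv₂, x₂, hx₂⟩ := hP
      have hc'2 : c' * c' = c' := by
        have h := LinearMap.congr_fun (hidem v₂) x₂
        simp only [LinearMap.comp_apply] at h
        rw [hc' v₂ hv₂ x₂, map_smul, hc' v₂ hv₂ x₂, smul_smul] at h
        have h2 : (c' * c' - c') • x₂ = 0 := by rw [sub_smul, h, sub_self]
        rcases smul_eq_zero.mp h2 with h3 | h3
        · exact sub_eq_zero.mp h3
        · exact absurd h3 hx₂
      have hc'01 : c' = 0 ∨ c' = 1 := by
        rcases mul_eq_zero.mp (show c' * (c' - 1) = 0 by linear_combination hc'2) with h | h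
        · exact Or.inl h
        · exact Or.inr (sub_eq_zero.mp h)
      rcases hcw01 with h0 | h1 <;> rcases hc'01 with h0' | h1'
      · left
        intro v
        rcases eq_or_ne ω v with rfl | hv
        · ext x
          simp [heω x, h0]
        · ext x
          simp [hc' v (Ne.symm hv) x, h0']
      · exfalso
        apply key (fun v => LinearMap.id - e v)
        · intro a'
          ext x
          simp only [LinearMap.comp_apply, LinearMap.sub_apply, LinearMap.id_apply, map_sub]
          have := LinearMap.congr_fun (hcomm a') x
          simp only [LinearMap.comp_apply] at this
          rw [this]
        · intro x
          simp [heω x, h0]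
        · intro v hv
          ext x
          simp [hc' v hv x, h1']
      · exfalso
        apply key e hcomm
        · intro x
          rw [heω x, h1, one_smul]
        · intro v hv
          ext x
          simp [hc' v hv x, h0']
      · right
        intro v
        rcases eq_or_ne ω v with rfl | hv
        · ext x
          simp [heω x, h1]
        · ext x
          simp [hc' v (Ne.symm hv) x, h1']
    · push_neg at hP
      rcases hcw01 with h0 | h1
      · left
        intro v
        rcases eq_or_ne ω v with rfl | hv
        · ext x
          simp [heω x, h0]
        · ext x
          simp [hP v (Ne.symm hv) x]
      · right
        intro v
        rcases eq_or_ne ω v with rfl | hv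
        · ext x
          simp [heω x, h1]
        · ext x
          simp [hP v (Ne.symm hv) x]
  · exact ⟨j, q, hjhom, hqhom, hjinj, hqsurj, hkerq⟩
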